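/- Suppose for each pair of integers 0 ≤ M₁ < M₂ ≤ N, a measurable function T_{M₁,M₂} on (0,1) satisfies ‖T_{M₁,M₂}‖_{L²} ≤ D·(∑_{k=M₁+1}^{M₂} c_k²)^{1/2}, and T_{M₁,M₃} = T_{M₁,M₂} + T_{M₂,M₃} for M₁ < M₂ < M₃. Then ‖max_{1≤M≤N} |T_{0,M}|‖_{L²} ≤ D·(⌈log₂ N⌉ + 1)·(∑_{k=1}^N c_k²)^{1/2}. -/

import Mathlib

open Finset MeasureTheory

private lemma rm_norm_toLp_two {α : Type*} [MeasurableSpace α] {μ : Measure α} {f : α → ℝ}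
    (hf : MemLp f 2 μ) : ‖hf.toLp f‖ = Real.sqrt (∫ x, f x ^ 2 ∂μ) := by
  have h1 : (inner ℝ (hf.toLp f) (hf.toLp f) : ℝ) = ∫ x, f x ^ 2 ∂μ := by
    rw [L2.inner_def]
    apply integral_congr_ae
    filter_upwards [hf.coeFn_toLp] with x hx
    simp [hx, RCLike.inner_apply, sq]
  rw [← h1, real_inner_self_eq_norm_sq, Real.sqrt_sq (norm_nonneg _)]

private lemma rm_mink2 {α : Type*} [MeasurableSpace α] {μ : Measure α} {f g : α → ℝ}
    (hf : MemLp f 2 μ) (hg : MemLp g 2 μ) :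
    Real.sqrt (∫ x, (f x + g x) ^ 2 ∂μ)
      ≤ Real.sqrt (∫ x, f x ^ 2 ∂μ) + Real.sqrt (∫ x, g x ^ 2 ∂μ) := by
  have hfg : MemLp (f + g) 2 μ := hf.add hg
  have h1 : Real.sqrt (∫ x, (f x + g x) ^ 2 ∂μ) = ‖hfg.toLp (f + g)‖ := by
    rw [rm_norm_toLp_two hfg]
    simp only [Pi.add_apply]
  rw [h1, ← rm_norm_toLp_two hf, ← rm_norm_toLp_two hg, MemLp.toLp_add hf hg]
  exact norm_add_le _ _

private lemma rm_minkS {ι α : Type*} [MeasurableSpace α] {μ : Measure α} (s : Finset ι)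
    (f : ι → α → ℝ) (hf : ∀ i, MemLp (f i) 2 μ) :
    Real.sqrt (∫ x, (∑ i ∈ s, f i x) ^ 2 ∂μ)
      ≤ ∑ i ∈ s, Real.sqrt (∫ x, (f i x) ^ 2 ∂μ) := by
  classical
  induction s using Finset.induction_on with
  | empty => simp
  | @insert a s ha ih =>
    have hsum : MemLp (fun x => ∑ i ∈ s, f i x) 2 μ := memLp_finset_sum s (fun i _ => hf i)
    calc Real.sqrt (∫ x, (∑ i ∈ insert a s, f i x) ^ 2 ∂μ)
        = Real.sqrt (∫ x, (f a x + ∑ i ∈ s, f i x) ^ 2 ∂μ) := by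
          simp [Finset.sum_insert ha]
      _ ≤ Real.sqrt (∫ x, (f a x) ^ 2 ∂μ)
            + Real.sqrt (∫ x, (∑ i ∈ s, f i x) ^ 2 ∂μ) := rm_mink2 (hf a) hsum
      _ ≤ Real.sqrt (∫ x, (f a x) ^ 2 ∂μ)
            + ∑ i ∈ s, Real.sqrt (∫ x, (f i x) ^ 2 ∂μ) := add_le_add_right ih _
      _ = ∑ i ∈ insert a s, Real.sqrt (∫ x, (f i x) ^ 2 ∂μ) := by
          rw [Finset.sum_insert ha]

private lemma rm_telescope (n d : ℕ) (f : ℕ → ℝ) :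
    ∑ i ∈ Finset.range n, ∑ k ∈ Finset.Ioc (i * d) ((i + 1) * d), f k
      = ∑ k ∈ Finset.Ioc 0 (n * d), f k := by
  induction n with
  | zero => simp
  | succ n ih =>
    rw [Finset.sum_range_succ, ih,
      Finset.sum_Ioc_consecutive f (Nat.zero_le _) (by nlinarith)]

theorem stmt17 (N : ℕ) (hN : 1 ≤ N) (T : ℕ → ℕ → ℝ → ℝ)
    (hmeas : ∀ M₁ M₂, Measurable (T M₁ M₂))
    (c : ℕ → ℝ) (D : ℝ) (hD : 0 ≤ D)
    (hnorm : ∀ M₁ M₂, M₁ < M₂ → M₂ ≤ N →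
      Real.sqrt (∫ x in Set.Ioo (0:ℝ) 1, (T M₁ M₂ x) ^ 2)
        ≤ D * Real.sqrt (∑ k ∈ Finset.Ioc M₁ M₂, (c k) ^ 2))
    (hadd : ∀ M₁ M₂ M₃, M₁ < M₂ → M₂ < M₃ → M₃ ≤ N →
      ∀ x, T M₁ M₃ x = T M₁ M₂ x + T M₂ M₃ x) :
    Real.sqrt (∫ x in Set.Ioo (0:ℝ) 1,
        ((Finset.Icc 1 N).sup' (Finset.nonempty_Icc.2 hN) (fun M => |T 0 M x|)) ^ 2)
      ≤ D * ((⌈Real.logb 2 N⌉₊ : ℝ) + 1) * Real.sqrt (∑ k ∈ Finset.Icc 1 N, (c k) ^ 2) := by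
  classical
  set μ := volume.restrict (Set.Ioo (0:ℝ) 1) with hμdef
  set S : ℝ → ℝ := fun x =>
    (Finset.Icc 1 N).sup' (Finset.nonempty_Icc.2 hN) (fun M => |T 0 M x|) with hSdef
  have hSnn : ∀ x, 0 ≤ S x := by
    intro x
    have h := Finset.le_sup' (fun M => |T 0 M x|) (Finset.mem_Icc.mpr ⟨hN, le_refl N⟩)
    exact le_trans (abs_nonneg (T 0 N x)) h
  have hRHSnn : 0 ≤ D * ((⌈Real.logb 2 N⌉₊ : ℝ) + 1)
      * Real.sqrt (∑ k ∈ Finset.Icc 1 N, (c k) ^ 2) :=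
    mul_nonneg (mul_nonneg hD (by positivity)) (Real.sqrt_nonneg _)
  by_cases hint : ∀ M ∈ Finset.Icc 1 N, Integrable (fun x => T 0 M x ^ 2) μ
  swap
  · -- some T 0 M not square-integrable ⇒ LHS integral is 0
    push_neg at hint
    obtain ⟨M, hM, hni⟩ := hint
    have hsupni : ¬ Integrable (fun x => S x ^ 2) μ := by
      intro h
      refine hni (h.mono' ((hmeas 0 M).pow_const 2).aestronglyMeasurable ?_)
      refine Filter.Eventually.of_forall (fun x => ?_)
      have h1 : |T 0 M x| ≤ S x := Finset.le_sup' (fun M => |T 0 M x|) hM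
      have h2 : T 0 M x ^ 2 ≤ S x ^ 2 := by
        rw [← sq_abs (T 0 M x)]
        exact pow_le_pow_left₀ (abs_nonneg _) h1 2
      rw [Real.norm_eq_abs, abs_of_nonneg (sq_nonneg _)]
      exact h2
    rw [show (∫ x in Set.Ioo (0:ℝ) 1, S x ^ 2) = ∫ x, S x ^ 2 ∂μ from rfl,
      integral_undef hsupni, Real.sqrt_zero]
    exact hRHSnn
  -- main case
  have hmem0 : ∀ M, 1 ≤ M → M ≤ N → MemLp (T 0 M) 2 μ := fun M h1 h2 =>
    (memLp_two_iff_integrable_sq (hmeas 0 M).aestronglyMeasurable).mpr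
      (hint M (Finset.mem_Icc.mpr ⟨h1, h2⟩))
  have hmemB : ∀ M₁ M₂, M₁ < M₂ → M₂ ≤ N → MemLp (T M₁ M₂) 2 μ := by
    intro M₁ M₂ h12 h2N
    rcases Nat.eq_zero_or_pos M₁ with h0 | h0
    · subst h0; exact hmem0 M₂ h12 h2N
    · have heq : T M₁ M₂ = T 0 M₂ - T 0 M₁ := by
        funext x
        have := hadd 0 M₁ M₂ h0 h12 h2N x
        simp only [Pi.sub_apply]
        linarith
      rw [heq]
      exact (hmem0 M₂ (le_trans h0 (le_of_lt h12)) h2N).sub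
        (hmem0 M₁ h0 (le_of_lt (lt_of_lt_of_le h12 h2N)))
  set L := ⌈Real.logb 2 (N:ℝ)⌉₊ with hLdef
  have hN2L : N ≤ 2 ^ L := by
    have hNpos : (0:ℝ) < N := by exact_mod_cast hN
    have h1 : (N:ℝ) ≤ (2:ℝ) ^ (L:ℝ) := by
      calc (N:ℝ) = (2:ℝ) ^ Real.logb 2 (N:ℝ) :=
            (Real.rpow_logb two_pos (by norm_num) hNpos).symm
        _ ≤ (2:ℝ) ^ (L:ℝ) :=
            Real.rpow_le_rpow_of_exponent_le one_le_two (Nat.le_ceil _)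
    have h2 : ((2:ℝ) ^ (L:ℝ)) = ((2 ^ L : ℕ) : ℝ) := by
      rw [Real.rpow_natCast]; push_cast; ring
    rw [h2] at h1
    exact_mod_cast h1
  set G : ℕ → ℝ → ℝ := fun j x =>
    Real.sqrt (∑ i ∈ Finset.range (N / 2 ^ j), T (i * 2 ^ j) ((i + 1) * 2 ^ j) x ^ 2)
    with hGdef
  have hGnn : ∀ j x, 0 ≤ G j x := fun j x => Real.sqrt_nonneg _
  have h2jpos : ∀ j : ℕ, 0 < 2 ^ j := fun j => Nat.pow_pos (by norm_num)
  have hblockmem : ∀ j i, i ∈ Finset.range (N / 2 ^ j) →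
      MemLp (T (i * 2 ^ j) ((i + 1) * 2 ^ j)) 2 μ := by
    intro j i hi
    have h1 : (i + 1) * 2 ^ j ≤ N :=
      (Nat.le_div_iff_mul_le (h2jpos j)).mp (Finset.mem_range.mp hi)
    exact hmemB _ _ (by have := h2jpos j; nlinarith) h1
  have hGsq : ∀ j x, G j x ^ 2
      = ∑ i ∈ Finset.range (N / 2 ^ j), T (i * 2 ^ j) ((i + 1) * 2 ^ j) x ^ 2 :=
    fun j x => Real.sq_sqrt (Finset.sum_nonneg fun i _ => sq_nonneg _)
  have hGint : ∀ j, Integrable (fun x => G j x ^ 2) μ := by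
    intro j
    have h1 : Integrable (fun x =>
        ∑ i ∈ Finset.range (N / 2 ^ j), T (i * 2 ^ j) ((i + 1) * 2 ^ j) x ^ 2) μ :=
      integrable_finset_sum _ (fun i hi => (hblockmem j i hi).integrable_sq)
    exact h1.congr (Filter.Eventually.of_forall fun x => (hGsq j x).symm)
  have hGmeas : ∀ j, Measurable (G j) := by
    intro j
    apply Measurable.sqrt
    exact Finset.measurable_sum _ (fun i _ => (hmeas _ _).pow_const 2)
  have hGmem : ∀ j, MemLp (G j) 2 μ := fun j =>
    (memLp_two_iff_integrable_sq (hGmeas j).aestronglyMeasurable).mpr (hGint j)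
  have hblock_le : ∀ j i x, (i + 1) * 2 ^ j ≤ N →
      |T (i * 2 ^ j) ((i + 1) * 2 ^ j) x| ≤ G j x := by
    intro j i x h
    have hmem : i ∈ Finset.range (N / 2 ^ j) :=
      Finset.mem_range.mpr ((Nat.le_div_iff_mul_le (h2jpos j)).mpr h)
    have h1 : T (i * 2 ^ j) ((i + 1) * 2 ^ j) x ^ 2
        ≤ ∑ i' ∈ Finset.range (N / 2 ^ j), T (i' * 2 ^ j) ((i' + 1) * 2 ^ j) x ^ 2 :=
      Finset.single_le_sum (f := fun i' => T (i' * 2 ^ j) ((i' + 1) * 2 ^ j) x ^ 2)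
        (fun i' _ => sq_nonneg _) hmem
    calc |T (i * 2 ^ j) ((i + 1) * 2 ^ j) x|
        = Real.sqrt (T (i * 2 ^ j) ((i + 1) * 2 ^ j) x ^ 2) := (Real.sqrt_sq_eq_abs _).symm
      _ ≤ G j x := Real.sqrt_le_sqrt h1
  -- dyadic decomposition bound
  have hQ : ∀ j s M x, 2 ^ j ∣ s → 0 < M → M < 2 ^ j → s + M ≤ N →
      |T s (s + M) x| ≤ ∑ j' ∈ Finset.range j, G j' x := by
    intro j
    induction j with
    | zero => intro s M x _ hM0 hM1 _; omega
    | succ j ih =>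
      intro s M x hdvd hM0 hMlt hsN
      have hdj : 2 ^ j ∣ s := dvd_trans (pow_dvd_pow 2 (Nat.le_succ j)) hdvd
      obtain ⟨i, hi⟩ := hdj
      have his : s = i * 2 ^ j := by rw [hi]; ring
      have hblk : s + 2 ^ j ≤ N → |T s (s + 2 ^ j) x| ≤ G j x := by
        intro hle
        have := hblock_le j i x (by rw [his] at hle; nlinarith [h2jpos j])
        rw [his, show (i + 1) * 2 ^ j = i * 2 ^ j + 2 ^ j by ring] at *
        exact this
      rcases lt_trichotomy M (2 ^ j) with h | h | h
      · exact le_trans (ih s M x ⟨i, hi⟩ hM0 h hsN)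
          (Finset.sum_le_sum_of_subset_of_nonneg
            (Finset.range_subset_range.mpr (Nat.le_succ j)) (fun i' _ _ => hGnn i' x))
      · subst h
        have h1 := hblk hsN
        rw [Finset.sum_range_succ]
        have h2 : 0 ≤ ∑ j' ∈ Finset.range j, G j' x :=
          Finset.sum_nonneg fun j' _ => hGnn j' x
        linarith
      · have hMlt2 : M < 2 ^ j + 2 ^ j := by
          have : (2:ℕ) ^ (j + 1) = 2 ^ j + 2 ^ j := by ring
          omega
        have hsplit := hadd s (s + 2 ^ j) (s + M)
          (by have := h2jpos j; omega) (by omega) hsN x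
        have h1 : |T s (s + 2 ^ j) x| ≤ G j x := hblk (by omega)
        have h2 : |T (s + 2 ^ j) (s + M) x| ≤ ∑ j' ∈ Finset.range j, G j' x := by
          have heq : s + M = (s + 2 ^ j) + (M - 2 ^ j) := by omega
          rw [heq]
          exact ih (s + 2 ^ j) (M - 2 ^ j) x
            (dvd_add ⟨i, hi⟩ (dvd_refl _)) (by omega) (by omega) (by omega)
        calc |T s (s + M) x| = |T s (s + 2 ^ j) x + T (s + 2 ^ j) (s + M) x| := by
              rw [hsplit]
          _ ≤ |T s (s + 2 ^ j) x| + |T (s + 2 ^ j) (s + M) x| := abs_add_le _ _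
          _ ≤ G j x + ∑ j' ∈ Finset.range j, G j' x := add_le_add h1 h2
          _ = ∑ j' ∈ Finset.range (j + 1), G j' x := by
              rw [Finset.sum_range_succ]; ring
  have hpt : ∀ x, S x ≤ ∑ j ∈ Finset.range (L + 1), G j x := by
    intro x
    apply Finset.sup'_le
    intro M hM
    obtain ⟨hM1, hMN⟩ := Finset.mem_Icc.mp hM
    rcases lt_or_eq_of_le (le_trans hMN hN2L) with h | h
    · have h1 := hQ L 0 M x (dvd_zero _) hM1 h (by omega)
      rw [Nat.zero_add] at h1
      exact le_trans h1 (Finset.sum_le_sum_of_subset_of_nonneg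
        (Finset.range_subset_range.mpr (Nat.le_succ L)) (fun j' _ _ => hGnn j' x))
    · have hb := hblock_le L 0 x (by simpa using h ▸ hMN)
      rw [show (0:ℕ) * 2 ^ L = 0 by ring, show (0 + 1) * 2 ^ L = 2 ^ L by ring, ← h] at hb
      exact le_trans hb (Finset.single_le_sum (f := fun j => G j x)
        (fun j _ => hGnn j x) (Finset.mem_range.mpr (Nat.lt_succ_self L)))
  have hlev : ∀ j, Real.sqrt (∫ x, G j x ^ 2 ∂μ)
      ≤ D * Real.sqrt (∑ k ∈ Finset.Icc 1 N, c k ^ 2) := by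
    intro j
    have hIeq : ∫ x, G j x ^ 2 ∂μ
        = ∑ i ∈ Finset.range (N / 2 ^ j), ∫ x, T (i * 2 ^ j) ((i + 1) * 2 ^ j) x ^ 2 ∂μ := by
      rw [integral_congr_ae (Filter.Eventually.of_forall (fun x => hGsq j x))]
      exact integral_finset_sum _ (fun i hi => (hblockmem j i hi).integrable_sq)
    have hterm : ∀ i ∈ Finset.range (N / 2 ^ j),
        ∫ x, T (i * 2 ^ j) ((i + 1) * 2 ^ j) x ^ 2 ∂μ
          ≤ D ^ 2 * ∑ k ∈ Finset.Ioc (i * 2 ^ j) ((i + 1) * 2 ^ j), c k ^ 2 := by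
      intro i hi
      have hbN : (i + 1) * 2 ^ j ≤ N :=
        (Nat.le_div_iff_mul_le (h2jpos j)).mp (Finset.mem_range.mp hi)
      have hle := hnorm (i * 2 ^ j) ((i + 1) * 2 ^ j)
        (by have := h2jpos j; nlinarith) hbN
      have hInn : (0:ℝ) ≤ ∫ x, T (i * 2 ^ j) ((i + 1) * 2 ^ j) x ^ 2 ∂μ :=
        integral_nonneg (fun x => sq_nonneg _)
      have hcnn : (0:ℝ) ≤ ∑ k ∈ Finset.Ioc (i * 2 ^ j) ((i + 1) * 2 ^ j), c k ^ 2 :=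
        Finset.sum_nonneg fun k _ => sq_nonneg _
      nlinarith [Real.sq_sqrt hInn, Real.sq_sqrt hcnn,
        Real.sqrt_nonneg (∫ x, T (i * 2 ^ j) ((i + 1) * 2 ^ j) x ^ 2 ∂μ),
        Real.sqrt_nonneg (∑ k ∈ Finset.Ioc (i * 2 ^ j) ((i + 1) * 2 ^ j), c k ^ 2)]
    have hsum1 : ∑ i ∈ Finset.range (N / 2 ^ j),
        (D ^ 2 * ∑ k ∈ Finset.Ioc (i * 2 ^ j) ((i + 1) * 2 ^ j), c k ^ 2)
        = D ^ 2 * ∑ k ∈ Finset.Ioc 0 ((N / 2 ^ j) * 2 ^ j), c k ^ 2 := by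
      rw [← Finset.mul_sum, rm_telescope]
    have hsub : ∑ k ∈ Finset.Ioc 0 ((N / 2 ^ j) * 2 ^ j), c k ^ 2
        ≤ ∑ k ∈ Finset.Icc 1 N, c k ^ 2 := by
      apply Finset.sum_le_sum_of_subset_of_nonneg
      · intro k hk
        rw [Finset.mem_Ioc] at hk
        rw [Finset.mem_Icc]
        exact ⟨hk.1, le_trans hk.2 (Nat.div_mul_le_self N (2 ^ j))⟩
      · intro k _ _; exact sq_nonneg _
    have hItot : ∫ x, G j x ^ 2 ∂μ ≤ D ^ 2 * ∑ k ∈ Finset.Icc 1 N, c k ^ 2 := by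
      rw [hIeq]
      calc ∑ i ∈ Finset.range (N / 2 ^ j), ∫ x, T (i * 2 ^ j) ((i + 1) * 2 ^ j) x ^ 2 ∂μ
          ≤ ∑ i ∈ Finset.range (N / 2 ^ j),
              (D ^ 2 * ∑ k ∈ Finset.Ioc (i * 2 ^ j) ((i + 1) * 2 ^ j), c k ^ 2) :=
            Finset.sum_le_sum hterm
        _ = D ^ 2 * ∑ k ∈ Finset.Ioc 0 ((N / 2 ^ j) * 2 ^ j), c k ^ 2 := hsum1
        _ ≤ D ^ 2 * ∑ k ∈ Finset.Icc 1 N, c k ^ 2 :=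
            mul_le_mul_of_nonneg_left hsub (sq_nonneg D)
    calc Real.sqrt (∫ x, G j x ^ 2 ∂μ)
        ≤ Real.sqrt (D ^ 2 * ∑ k ∈ Finset.Icc 1 N, c k ^ 2) := Real.sqrt_le_sqrt hItot
      _ = D * Real.sqrt (∑ k ∈ Finset.Icc 1 N, c k ^ 2) := by
          rw [Real.sqrt_mul (sq_nonneg D), Real.sqrt_sq hD]
  -- assemble
  have hGsumMem : MemLp (fun x => ∑ j ∈ Finset.range (L + 1), G j x) 2 μ :=
    memLp_finset_sum _ (fun j _ => hGmem j)
  have hstep1 : ∫ x, S x ^ 2 ∂μ ≤ ∫ x, (∑ j ∈ Finset.range (L + 1), G j x) ^ 2 ∂μ := by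
    apply integral_mono_of_nonneg
    · exact Filter.Eventually.of_forall fun x => sq_nonneg _
    · exact hGsumMem.integrable_sq
    · refine Filter.Eventually.of_forall fun x => ?_
      exact pow_le_pow_left₀ (hSnn x) (hpt x) 2
  have hstep2 := rm_minkS (Finset.range (L + 1)) G hGmem (μ := μ)
  have hstep3 : ∑ j ∈ Finset.range (L + 1), Real.sqrt (∫ x, G j x ^ 2 ∂μ)
      ≤ ((L : ℝ) + 1) * (D * Real.sqrt (∑ k ∈ Finset.Icc 1 N, c k ^ 2)) := by
    calc ∑ j ∈ Finset.range (L + 1), Real.sqrt (∫ x, G j x ^ 2 ∂μ)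
        ≤ ∑ _j ∈ Finset.range (L + 1), D * Real.sqrt (∑ k ∈ Finset.Icc 1 N, c k ^ 2) :=
          Finset.sum_le_sum (fun j _ => hlev j)
      _ = ((L : ℝ) + 1) * (D * Real.sqrt (∑ k ∈ Finset.Icc 1 N, c k ^ 2)) := by
          rw [Finset.sum_const, Finset.card_range, nsmul_eq_mul]; push_cast; ring
  calc Real.sqrt (∫ x, S x ^ 2 ∂μ)
      ≤ Real.sqrt (∫ x, (∑ j ∈ Finset.range (L + 1), G j x) ^ 2 ∂μ) :=
        Real.sqrt_le_sqrt hstep1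
    _ ≤ ∑ j ∈ Finset.range (L + 1), Real.sqrt (∫ x, G j x ^ 2 ∂μ) := hstep2
    _ ≤ ((L : ℝ) + 1) * (D * Real.sqrt (∑ k ∈ Finset.Icc 1 N, c k ^ 2)) := hstep3
    _ = D * ((L : ℝ) + 1) * Real.sqrt (∑ k ∈ Finset.Icc 1 N, c k ^ 2) := by ring
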